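/- Let R be an infinite commutative noetherian integral domain and M a free R-module of countably infinite rank with free generators (g_n)_{n<ω}. Let (a_α)_{α<σ} be a family of nonzero elements of M indexed by an ordinal σ such that the submodules M_α generated by {a_β : β < α} form a strictly increasing chain (i.e. a_α ∉ M_α for each α < σ), and let (z_α)_{α<σ} be arbitrary elements of R. Then there exists an R-module homomorphism ψ : M → R such that ψ(a_α) ≠ z_α for all α < σ. -/

import Mathlib

/-- Lemma 2.3 of the paper, countable-rank case: over an infinite commutative
noetherian domain `R`, for a free module `M` of countably infinite rank, a family
`a` indexed by a well-order with `a α ∉ ⟨a β : β < α⟩`, and arbitrary `z α ∈ R`,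
there is `ψ : M →ₗ R` with `ψ (a α) ≠ z α` for all `α`. -/
theorem stmt0 {R : Type*} [CommRing R] [IsDomain R] [IsNoetherianRing R] [Infinite R]
    {M : Type*} [AddCommGroup M] [Module R M] (b : Module.Basis ℕ R M)
    {σ : Type*} [LinearOrder σ] [WellFoundedLT σ]
    (a : σ → M) (ha : ∀ α, a α ∉ Submodule.span R (a '' Set.Iio α))
    (z : σ → R) :
    ∃ ψ : M →ₗ[R] R, ∀ α, ψ (a α) ≠ z α := by
  classical
  set r : σ → ℕ →₀ R := fun α => b.repr (a α) with hr
  have hr0 : ∀ α, (r α).support.Nonempty := by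
    intro α
    rw [Finsupp.support_nonempty_iff]
    intro h0
    have h1 : a α = 0 := b.repr.map_eq_zero_iff.mp h0
    exact ha α (h1 ▸ Submodule.zero_mem _)
  -- the maximal index of the support of `a α`
  set d : σ → ℕ := fun α => (r α).support.max' (hr0 α) with hd
  have hdmem : ∀ α, d α ∈ (r α).support := fun α => Finset.max'_mem _ _
  have hdle : ∀ α, ∀ i ∈ (r α).support, i ≤ d α := fun α i hi => Finset.le_max' _ _ hi
  have hdne : ∀ α, r α (d α) ≠ 0 := fun α => Finsupp.mem_support_iff.mp (hdmem α)
  -- for each `n`, only finitely many `α` have support contained in `[0, n]`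
  have hfin : ∀ n : ℕ, {α : σ | ∀ i ∈ (r α).support, i ≤ n}.Finite := by
    intro n
    rw [← Set.not_infinite]
    intro hinf
    set s := {α : σ | ∀ i ∈ (r α).support, i ≤ n} with hs
    -- extract a strictly increasing sequence in `s`
    obtain ⟨u, hu_mem, hu_mono⟩ : ∃ u : ℕ → σ, (∀ k, u k ∈ s) ∧ StrictMono u := by
      have e : ℕ ↪ s := hinf.natEmbedding _
      obtain ⟨g, hg⟩ := (((Set.isWF_univ_iff (α := σ)).2 inferInstance).isPWO).exists_monotone_subseq
        (f := fun k => (e k : σ)) (fun _ => Set.mem_univ _)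
      have hinj : Function.Injective ((fun k => ((e k : s) : σ)) ∘ g) := by
        intro x y hxy
        exact g.injective (e.injective (Subtype.ext hxy))
      exact ⟨fun k => (e (g k) : σ), fun k => (e (g k)).2,
        hg.strictMono_of_injective hinj⟩
    -- the finitely generated noetherian submodule
    set F : Submodule R M := Submodule.span R (b '' Set.Iic n) with hF
    have hFG : F.FG := Submodule.fg_span ((Set.finite_Iic n).image b)
    have : IsNoetherian R F := isNoetherian_of_fg_of_noetherian F hFG
    have haF : ∀ α ∈ s, a α ∈ F := by
      intro α hα
      refine Submodule.span_mono (Set.image_mono ?_) (b.mem_span_repr_support (a α))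
      intro i hi
      exact hα i hi
    -- a strictly increasing chain of submodules of `F`
    have hmono : Monotone fun k =>
        Submodule.comap F.subtype (Submodule.span R (a '' Set.Iio (u k))) := by
      intro k l hkl
      exact Submodule.comap_mono (Submodule.span_mono
        (Set.image_mono (Set.Iio_subset_Iio (hu_mono.monotone hkl))))
    obtain ⟨k0, hk0⟩ := monotone_stabilizes_iff_noetherian.mpr this
      ⟨fun k => Submodule.comap F.subtype (Submodule.span R (a '' Set.Iio (u k))), hmono⟩
    have hlt : (⟨a (u k0), haF _ (hu_mem k0)⟩ : F) ∈
        Submodule.comap F.subtype (Submodule.span R (a '' Set.Iio (u (k0 + 1)))) := by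
      exact Submodule.subset_span (Set.mem_image_of_mem a (hu_mono (Nat.lt_succ_self k0)))
    have heq : Submodule.comap F.subtype (Submodule.span R (a '' Set.Iio (u k0))) =
        Submodule.comap F.subtype (Submodule.span R (a '' Set.Iio (u (k0 + 1)))) :=
      hk0 (k0 + 1) (Nat.le_succ k0)
    rw [← heq] at hlt
    exact ha (u k0) hlt
  -- choose values on the basis one at a time
  have hex : ∀ (n : ℕ) (prev : ∀ m, m < n → R), ∃ x : R, ∀ α, d α = n →
      r α n * x ≠ z α - ∑ i ∈ (r α).support.erase n,
        r α i * (if h : i < n then prev i h else 0) := by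
    intro n prev
    set B : Set R := {x : R | ∃ α, d α = n ∧ r α n * x = z α - ∑ i ∈ (r α).support.erase n,
      r α i * (if h : i < n then prev i h else 0)} with hB
    have hBfin : B.Finite := by
      have hTfin : {α : σ | d α = n}.Finite := by
        refine (hfin n).subset ?_
        intro α hα i hi
        exact hα ▸ hdle α i hi
      have hsub : B ⊆ ⋃ α ∈ {α : σ | d α = n}, {x : R | r α n * x = z α -
          ∑ i ∈ (r α).support.erase n, r α i * (if h : i < n then prev i h else 0)} := by
        rintro x ⟨α, hα, hx⟩
        exact Set.mem_biUnion hα hx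
      refine Set.Finite.subset (Set.Finite.biUnion hTfin ?_) hsub
      intro α hα
      refine Set.Subsingleton.finite ?_
      intro x hx y hy
      have hne : r α n ≠ 0 := hα ▸ hdne α
      exact mul_left_cancel₀ hne (hx.trans hy.symm)
    obtain ⟨x, hx⟩ := hBfin.infinite_compl.nonempty
    refine ⟨x, fun α hα heq => hx ⟨α, hα, heq⟩⟩
  set c : ℕ → R := (Nat.lt_wfRel.wf).fix (fun n prev => (hex n prev).choose) with hc
  have hcspec : ∀ n : ℕ, ∀ α, d α = n →
      r α n * c n ≠ z α - ∑ i ∈ (r α).support.erase n,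
        r α i * (if h : i < n then c i else 0) := by
    intro n
    have hfix : c n = (hex n fun m _ => c m).choose := by
      rw [hc, WellFounded.fix_eq]
    rw [hfix]
    exact fun α hα => (hex n fun m _ => c m).choose_spec α hα
  refine ⟨b.constr ℕ c, fun α hψ => ?_⟩
  rw [Module.Basis.constr_apply] at hψ
  have hsum : (r α).sum (fun i t => t • c i) = r α (d α) * c (d α) +
      ∑ i ∈ (r α).support.erase (d α), r α i * c i := by
    rw [Finsupp.sum, ← Finset.add_sum_erase _ _ (hdmem α)]
    simp [smul_eq_mul]
  rw [hsum] at hψ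
  have hkey := hcspec (d α) α rfl
  have hdite : ∀ i ∈ (r α).support.erase (d α),
      r α i * (if h : i < d α then c i else 0) = r α i * c i := by
    intro i hi
    have hilt : i < d α :=
      lt_of_le_of_ne (hdle α i (Finset.mem_of_mem_erase hi)) (Finset.ne_of_mem_erase hi)
    rw [dif_pos hilt]
  apply hkey
  rw [Finset.sum_congr rfl hdite]
  linear_combination hψ
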